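/- n-step transition probabilities and non-convergence of CM2: for every x₀ ∈ (0,1) and n ≥ 1, pⁿ(x₀,{x₀^{2ⁿ}}) = ∏_{k=0}^{n−1} (1 − x₀^{2ᵏ}) and pⁿ(x₀,{0}) = 1 − ∏_{k=0}^{n−1} (1 − x₀^{2ᵏ}); the products decrease and converge as n → ∞ to a limit γ(x₀) = ∏_{k=0}^∞ (1 − x₀^{2ᵏ}) with 0 < γ(x₀) < 1. Consequently the total variation distance ‖μ_n − δ₀‖ does not tend to 0; in fact pⁿ(x₀,{0}) → 1 − γ(x₀) < 1. -/

import Mathlib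

open MeasureTheory Set Filter Topology Function

/-- A bounded finitely additive set function on the σ-algebra. -/
def IsFinAdd {X : Type*} [MeasurableSpace X] (μ : Set X → ℝ) : Prop :=
  μ ∅ = 0 ∧ ∀ E F : Set X, MeasurableSet E → MeasurableSet F → Disjoint E F →
    μ (E ∪ F) = μ E + μ F

/-- Nonnegativity on measurable sets. -/
def IsNonnegSF {X : Type*} [MeasurableSpace X] (μ : Set X → ℝ) : Prop :=
  ∀ E : Set X, MeasurableSet E → 0 ≤ μ E

/-- Countable additivity on the σ-algebra. -/
def IsCtblAdd {X : Type*} [MeasurableSpace X] (μ : Set X → ℝ) : Prop :=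
  ∀ E : ℕ → Set X, (∀ n, MeasurableSet (E n)) → Pairwise (Disjoint on E) →
    HasSum (fun n => μ (E n)) (μ (⋃ n, E n))

/-- A nonnegative finitely additive measure is purely finitely additive if the only
countably additive measure `lam` with `0 ≤ lam ≤ μ` is `lam = 0`. -/
def IsPurelyFinAdd {X : Type*} [MeasurableSpace X] (μ : Set X → ℝ) : Prop :=
  ∀ lam : Set X → ℝ, IsFinAdd lam → IsCtblAdd lam →
    (∀ E, MeasurableSet E → 0 ≤ lam E) → (∀ E, MeasurableSet E → lam E ≤ μ E) →
    ∀ E, MeasurableSet E → lam E = 0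

/-- The integral of a bounded measurable function with respect to a (finitely additive)
set function, defined by the layer-cake formula. -/
noncomputable def faIntegral {X : Type*} [MeasurableSpace X] (μ : Set X → ℝ) (f : X → ℝ) : ℝ :=
  (∫ t in Set.Ioi (0:ℝ), μ {x | t < f x}) - (∫ t in Set.Ioi (0:ℝ), μ {x | f x < -t})

/-- The Dirac measure at `y`, as a set function. -/
noncomputable def diracSF (y : ℝ) (E : Set ℝ) : ℝ := E.indicator (fun _ => (1:ℝ)) y

/-- The transition function of CM1: `p(x,·) = x·δ_{x²} + (1-x)·δ₀` on `(0,1)`,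
`p(0,·) = δ₀`, `p(1,·) = δ₁` (the formula below specializes correctly at `0` and `1`). -/
noncomputable def p1 (x : ℝ) (E : Set ℝ) : ℝ :=
  x * diracSF (x ^ 2) E + (1 - x) * diracSF 0 E

/-- The transition function of CM2: `p(x,·) = (1-x)·δ_{x²} + x·δ₀` on `(0,1)`,
`p(0,·) = δ₀`, `p(1,·) = δ₁`. -/
noncomputable def p2 (x : ℝ) (E : Set ℝ) : ℝ :=
  if x = 1 then diracSF 1 E else (1 - x) * diracSF (x ^ 2) E + x * diracSF 0 E

/-- The transition function of CM3: the CM1 rule on `[0,1/2]`, the CM2 rule on `(1/2,1)`,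
`p(1,·) = δ₁`. -/
noncomputable def p3 (x : ℝ) (E : Set ℝ) : ℝ :=
  if x = 1 then diracSF 1 E
  else if x ≤ 1 / 2 then x * diracSF (x ^ 2) E + (1 - x) * diracSF 0 E
  else (1 - x) * diracSF (x ^ 2) E + x * diracSF 0 E

/-- The `n`-step transition function of CM1 (`p1n 0` is the identity kernel, and
`p1n (n+1) x E = ∫ p1n n (y,E) p(x,dy)` is the integral convolution). -/
noncomputable def p1n : ℕ → ℝ → Set ℝ → ℝ
  | 0 => fun x E => diracSF x E
  | n + 1 => fun x E => faIntegral (p1 x) fun y => p1n n y E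

/-- The `n`-step transition function of CM2. -/
noncomputable def p2n : ℕ → ℝ → Set ℝ → ℝ
  | 0 => fun x E => diracSF x E
  | n + 1 => fun x E => faIntegral (p2 x) fun y => p2n n y E

/-- The `n`-step transition function of CM3. -/
noncomputable def p3n : ℕ → ℝ → Set ℝ → ℝ
  | 0 => fun x E => diracSF x E
  | n + 1 => fun x E => faIntegral (p3 x) fun y => p3n n y E


section CM2Aux

lemma integ_ind (c : ℝ) : ∫ t in Set.Ioi (0:ℝ), (Set.Iio c).indicator (fun _ => (1:ℝ)) t = max c 0 := by
  rw [setIntegral_indicator measurableSet_Iio]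
  rw [show Set.Ioi (0:ℝ) ∩ Set.Iio c = Set.Ioo 0 c by rw [Set.Ioi_inter_Iio]]
  simp [Real.volume_Ioo, ENNReal.toReal_ofReal']

lemma intble_ind (c : ℝ) : MeasureTheory.Integrable ((Set.Iio c).indicator (fun _ => (1:ℝ)))
    (volume.restrict (Set.Ioi 0)) := by
  rw [integrable_indicator_iff measurableSet_Iio]
  refine integrableOn_const ?_ (by simp)
  rw [Measure.restrict_apply measurableSet_Iio, Set.Iio_inter_Ioi]
  exact (Real.volume_Ioo ..).symm ▸ ENNReal.ofReal_ne_top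

lemma max_sub_max (c : ℝ) : max c 0 - max (-c) 0 = c := by
  rcases le_total c 0 with h | h
  · rw [max_eq_right h, max_eq_left (by linarith : (0:ℝ) ≤ -c)]; ring
  · rw [max_eq_left h, max_eq_right (by linarith : -c ≤ 0)]; ring

lemma faIntegral_combo (a b u v : ℝ) (f : ℝ → ℝ) :
    faIntegral (fun E => a * diracSF u E + b * diracSF v E) f = a * f u + b * f v := by
  have key : ∀ g : ℝ → ℝ,
      (∫ t in Set.Ioi (0:ℝ), (a * diracSF u {x | t < g x} + b * diracSF v {x | t < g x}))
        = a * max (g u) 0 + b * max (g v) 0 := by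
    intro g
    have h1 : ∀ y t : ℝ, diracSF y {x | t < g x} = (Set.Iio (g y)).indicator (fun _ => (1:ℝ)) t := by
      intro y t
      simp [diracSF, Set.indicator_apply, Set.mem_setOf_eq, Set.mem_Iio]
    calc (∫ t in Set.Ioi (0:ℝ), (a * diracSF u {x | t < g x} + b * diracSF v {x | t < g x}))
        = ∫ t in Set.Ioi (0:ℝ), (a * (Set.Iio (g u)).indicator (fun _ => (1:ℝ)) t
            + b * (Set.Iio (g v)).indicator (fun _ => (1:ℝ)) t) := by
          exact integral_congr_ae (.of_forall fun t => by simp only [h1])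
      _ = a * max (g u) 0 + b * max (g v) 0 := by
          rw [integral_add ((intble_ind (g u)).const_mul a) ((intble_ind (g v)).const_mul b),
            integral_const_mul, integral_const_mul, integ_ind, integ_ind]
  have hset : ∀ t : ℝ, {x : ℝ | f x < -t} = {x : ℝ | t < -f x} := by
    intro t; ext x; simp only [Set.mem_setOf_eq]; constructor <;> intro <;> linarith
  have key2 : (∫ t in Set.Ioi (0:ℝ), (a * diracSF u {x | f x < -t} + b * diracSF v {x | f x < -t}))
        = a * max (-f u) 0 + b * max (-f v) 0 := by
    simp only [hset]
    simpa using key (fun x => -f x)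
  unfold faIntegral
  rw [key f, key2,
    show a * max (f u) 0 + b * max (f v) 0 - (a * max (-f u) 0 + b * max (-f v) 0)
      = a * (max (f u) 0 - max (-f u) 0) + b * (max (f v) 0 - max (-f v) 0) by ring,
    max_sub_max, max_sub_max]

lemma p2_eq {x : ℝ} (hx : x ≠ 1) :
    p2 x = fun E => (1 - x) * diracSF (x ^ 2) E + x * diracSF 0 E := by
  funext E; simp [p2, hx]

lemma p2n_zero : ∀ n : ℕ, ∀ E : Set ℝ, p2n n 0 E = diracSF 0 E
  | 0, E => rfl
  | n + 1, E => by
    show faIntegral (p2 0) (fun y => p2n n y E) = diracSF 0 E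
    rw [p2_eq (by norm_num : (0:ℝ) ≠ 1), faIntegral_combo]
    norm_num
    exact p2n_zero n E

lemma p2n_formula : ∀ n : ℕ, ∀ x : ℝ, x ∈ Set.Ioo (0:ℝ) 1 → ∀ E : Set ℝ,
    p2n n x E = (∏ k ∈ Finset.range n, (1 - x ^ (2 ^ k))) * diracSF (x ^ (2 ^ n)) E
      + (1 - ∏ k ∈ Finset.range n, (1 - x ^ (2 ^ k))) * diracSF 0 E
  | 0, x, hx, E => by simp [p2n]
  | n + 1, x, hx, E => by
    obtain ⟨hx0, hx1⟩ := hx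
    have hx2 : x ^ 2 ∈ Set.Ioo (0:ℝ) 1 := ⟨pow_pos hx0 2, pow_lt_one₀ hx0.le hx1 two_ne_zero⟩
    have step : p2n (n + 1) x E = (1 - x) * p2n n (x ^ 2) E + x * p2n n 0 E := by
      show faIntegral (p2 x) (fun y => p2n n y E) = _
      rw [p2_eq hx1.ne, faIntegral_combo]
    rw [step, p2n_formula n (x ^ 2) hx2 E, p2n_zero n E]
    have hpow : ∀ k : ℕ, (x ^ 2) ^ (2 ^ k) = x ^ (2 ^ (k + 1)) := by
      intro k; rw [← pow_mul, pow_succ, mul_comm (2 ^ k) 2]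
    have hprod : ∏ k ∈ Finset.range (n + 1), (1 - x ^ (2 ^ k))
        = (1 - x) * ∏ k ∈ Finset.range n, (1 - (x ^ 2) ^ (2 ^ k)) := by
      rw [Finset.prod_range_succ']
      simp only [hpow, pow_zero, pow_one]
      ring
    rw [hprod, hpow]
    ring

lemma diracSF_self (y : ℝ) : diracSF y {y} = 1 := by
  simp [diracSF]

lemma diracSF_not_mem {y : ℝ} {E : Set ℝ} (h : y ∉ E) : diracSF y E = 0 := by
  simp [diracSF, h]

lemma diracSF_mem_Icc (y : ℝ) (E : Set ℝ) : diracSF y E ∈ Set.Icc (0:ℝ) 1 := by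
  by_cases h : y ∈ E <;> simp [diracSF, h]

end CM2Aux

/-- n-step transition probabilities and non-convergence of CM2: the atom masses are the
partial products `∏_{k=0}^{n-1}(1 - x₀^{2ᵏ})`, which decrease to a limit `γ ∈ (0,1)`;
hence `pⁿ(x₀,{0}) → 1 - γ < 1` and the total variation distance to `δ₀` does
not tend to `0`. -/
theorem cm2_nstep_nonconvergence (x₀ : ℝ) (hx : x₀ ∈ Set.Ioo (0:ℝ) 1) :
    (∀ n : ℕ, 1 ≤ n →
      p2n n x₀ {x₀ ^ (2 ^ n)} = ∏ k ∈ Finset.range n, (1 - x₀ ^ (2 ^ k)) ∧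
      p2n n x₀ {0} = 1 - ∏ k ∈ Finset.range n, (1 - x₀ ^ (2 ^ k))) ∧
    (Antitone fun n : ℕ => ∏ k ∈ Finset.range n, (1 - x₀ ^ (2 ^ k))) ∧
    ∃ γ : ℝ, 0 < γ ∧ γ < 1 ∧
      Tendsto (fun n : ℕ => ∏ k ∈ Finset.range n, (1 - x₀ ^ (2 ^ k))) atTop (nhds γ) ∧
      Tendsto (fun n : ℕ => p2n n x₀ {0}) atTop (nhds (1 - γ)) ∧
      ¬ Tendsto (fun n : ℕ =>
          sSup {r : ℝ | ∃ E : Set ℝ, MeasurableSet E ∧ r = |p2n n x₀ E - diracSF 0 E|})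
        atTop (nhds 0) := by
  obtain ⟨hx0, hx1⟩ := hx
  set a : ℕ → ℝ := fun k => x₀ ^ (2 ^ k) with ha
  set P : ℕ → ℝ := fun n => ∏ k ∈ Finset.range n, (1 - a k) with hP
  have ha_mem : ∀ k, a k ∈ Set.Ioo (0:ℝ) 1 := fun k =>
    ⟨pow_pos hx0 _, pow_lt_one₀ hx0.le hx1 (Nat.pos_of_ne_zero (by positivity)).ne'⟩
  have hP_pos : ∀ n, 0 < P n := fun n =>
    Finset.prod_pos fun k _ => by linarith [(ha_mem k).2]
  have hP_le_one : ∀ n, P n ≤ 1 := fun n =>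
    Finset.prod_le_one (fun k _ => by linarith [(ha_mem k).2]) (fun k _ => by linarith [(ha_mem k).1])
  -- the closed formulas for the atom masses
  have hform := fun n => p2n_formula n x₀ ⟨hx0, hx1⟩
  have hatom : ∀ n : ℕ, p2n n x₀ {x₀ ^ (2 ^ n)} = P n := by
    intro n
    rw [hform n {x₀ ^ (2 ^ n)}, diracSF_self,
      diracSF_not_mem (by simp [Set.mem_singleton_iff]; positivity)]
    ring
  have hzero : ∀ n : ℕ, 1 ≤ n → p2n n x₀ {0} = 1 - P n := by
    intro n hn
    have hx2n : x₀ ^ (2 ^ n) ≠ 0 := by positivity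
    rw [hform n {0}, diracSF_self, diracSF_not_mem (by simpa using hx2n)]
    ring
  have hAnti : Antitone P := by
    apply antitone_nat_of_succ_le
    intro n
    rw [hP]
    simp only
    rw [Finset.prod_range_succ]
    nlinarith [hP_pos n, (ha_mem n).1, (ha_mem n).2]
  -- summability of the logarithms
  have ha_summable : Summable a := by
    apply Summable.of_nonneg_of_le (fun k => (ha_mem k).1.le)
      (fun k => pow_le_pow_of_le_one hx0.le hx1.le (Nat.lt_two_pow_self (n := k)).le)
    exact summable_geometric_of_lt_one hx0.le hx1
  have hlog_summable : Summable fun k => Real.log (1 - a k) := by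
    rw [← summable_neg_iff]
    apply Summable.of_nonneg_of_le
      (fun k => by
        rw [neg_nonneg]
        exact Real.log_nonpos (by linarith [(ha_mem k).2]) (by linarith [(ha_mem k).1]))
      (fun k => ?_) (ha_summable.mul_left (1 - x₀)⁻¹)
    have h1 : (0:ℝ) < 1 - a k := by linarith [(ha_mem k).2]
    have h2 : -Real.log (1 - a k) = Real.log (1 - a k)⁻¹ := (Real.log_inv _).symm
    rw [h2]
    have h3 : Real.log (1 - a k)⁻¹ ≤ (1 - a k)⁻¹ - 1 :=
      Real.log_le_sub_one_of_pos (by positivity)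
    have h4 : (1 - a k)⁻¹ - 1 = a k / (1 - a k) := by field_simp; ring
    have h5 : a k / (1 - a k) ≤ (1 - x₀)⁻¹ * a k := by
      have hax : a k ≤ x₀ := by
        have := pow_le_pow_of_le_one hx0.le hx1.le (Nat.one_le_two_pow (n := k))
        simpa [ha] using this
      rw [inv_mul_eq_div]
      gcongr
    linarith
  set γ : ℝ := Real.exp (∑' k, Real.log (1 - a k)) with hγ
  have hPexp : ∀ n, P n = Real.exp (∑ k ∈ Finset.range n, Real.log (1 - a k)) := by
    intro n
    rw [Real.exp_sum]
    exact Finset.prod_congr rfl fun k _ =>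
      (Real.exp_log (by linarith [(ha_mem k).2])).symm
  have hPtendsto : Tendsto P atTop (nhds γ) := by
    have hs := hlog_summable.hasSum.tendsto_sum_nat
    have h := (Real.continuous_exp.tendsto _).comp hs
    exact h.congr fun n => (hPexp n).symm
  have hγ_pos : 0 < γ := Real.exp_pos _
  have hγ_le : ∀ n, γ ≤ P n := fun n => hAnti.le_of_tendsto hPtendsto n
  have hγ_lt_one : γ < 1 := by
    have h1 : γ ≤ P 1 := hγ_le 1
    have h2 : P 1 = 1 - x₀ := by simp [hP, ha]
    linarith
  refine ⟨fun n _ => ⟨hatom n, hzero n ‹_›⟩, hAnti, γ, hγ_pos, hγ_lt_one, hPtendsto, ?_, ?_⟩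
  · -- p2n n x₀ {0} → 1 - γ
    have : ∀ᶠ n in atTop, 1 - P n = p2n n x₀ {0} := by
      filter_upwards [Filter.eventually_ge_atTop 1] with n hn
      exact (hzero n hn).symm
    exact Tendsto.congr' this (tendsto_const_nhds.sub hPtendsto)
  · -- non-convergence in total variation
    intro habs
    have hb : ∀ n, BddAbove {r : ℝ | ∃ E : Set ℝ, MeasurableSet E ∧ r = |p2n n x₀ E - diracSF 0 E|} := by
      intro n
      refine ⟨2, fun r hr => ?_⟩
      obtain ⟨E, -, rfl⟩ := hr
      have h1 := (diracSF_mem_Icc (x₀ ^ (2 ^ n)) E)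
      have h2 := (diracSF_mem_Icc 0 E)
      have h3 := hP_pos n
      have h4 := hP_le_one n
      rw [hform n E]
      rw [abs_le]
      constructor <;> nlinarith [h1.1, h1.2, h2.1, h2.2]
    have hmem : ∀ n, 1 ≤ n → P n ∈
        {r : ℝ | ∃ E : Set ℝ, MeasurableSet E ∧ r = |p2n n x₀ E - diracSF 0 E|} := by
      intro n hn
      refine ⟨{0}, measurableSet_singleton 0, ?_⟩
      rw [hzero n hn, diracSF_self]
      rw [abs_of_nonpos (by linarith [hP_pos n])]
      ring
    have hev := habs (Iio_mem_nhds hγ_pos)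
    rw [Filter.mem_map, Filter.mem_atTop_sets] at hev
    obtain ⟨N, hN⟩ := hev
    have h1 := hN (max N 1) (le_max_left _ _)
    have h2 : γ ≤ sSup {r : ℝ | ∃ E : Set ℝ, MeasurableSet E ∧
        r = |p2n (max N 1) x₀ E - diracSF 0 E|} :=
      le_trans (hγ_le _) (le_csSup (hb _) (hmem _ (le_max_right _ _)))
    simp only [Set.mem_preimage, Set.mem_Iio] at h1
    linarith
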